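/- Let H and F be candidate sequences on a compact metrizable space M. Then: (i) the transfinite sequence is monotone in the ordinal, i.e. for ordinals β ≤ α, u_β^H ≤ u_α^H pointwise; and (ii) if H and F are uniformly equivalent, then u_α^H = u_α^F for every ordinal α (so the transfinite sequence depends only on the uniform equivalence class). -/

import Mathlib

open Filter Topology Set
open scoped ENNReal

/-- A candidate sequence on a topological space `M`: a nondecreasing sequence of
nonnegative functions, starting at `0`, with bounded pointwise limit. -/
structure CandidateSeq (M : Type*) [TopologicalSpace M] where
  h : ℕ → M → ℝ
  nonneg : ∀ k x, 0 ≤ h k x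
  mono : ∀ x, Monotone fun k => h k x
  zero : ∀ x, h 0 x = 0
  limFn : M → ℝ
  tendsto_limFn : ∀ x, Tendsto (fun k => h k x) atTop (𝓝 (limFn x))
  bddAbove : ∃ B : ℝ, ∀ x, limFn x ≤ B

namespace CandidateSeq

variable {M : Type*} [TopologicalSpace M]

/-- The upper semicontinuous envelope of a `[0,∞]`-valued function:
`f~(x) = limsup_{y → x} f(y)`, the limsup including the value at `x` itself. -/
noncomputable def uscEnv (f : M → ℝ≥0∞) : M → ℝ≥0∞ := fun x => Filter.limsup f (𝓝 x)

/-- The tail functions `τ_k = h - h_k` (nonnegative, viewed in `[0,∞]`). -/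
noncomputable def tau (H : CandidateSeq M) (k : ℕ) : M → ℝ≥0∞ :=
  fun x => ENNReal.ofReal (H.limFn x - H.h k x)

/-- The transfinite sequence `u_α^H` associated to a candidate sequence, defined by
transfinite recursion: `u_0 ≡ 0`; `u_{α+1} = lim_k (u_α + τ_k)~` (the envelopes are
nonincreasing in `k`, so the limit is the infimum); at limit ordinals,
`u_α = (sup_{β<α} u_β)~`. Values are taken in `[0,∞]`. -/
noncomputable def u (H : CandidateSeq M) (α : Ordinal) : M → ℝ≥0∞ :=
  Ordinal.limitRecOn α
    (fun _ => 0)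
    (fun _ v => fun x => ⨅ k : ℕ, uscEnv (fun y => v y + H.tau k y) x)
    (fun o _ ih => uscEnv (fun y => ⨆ p : {β : Ordinal // β < o}, ih p.1 p.2 y))

/-- The order of accumulation of a candidate sequence: the least ordinal `α`
with `u_α = u_{α+1}`. -/
noncomputable def orderOfAccum (H : CandidateSeq M) : Ordinal :=
  sInf {α : Ordinal | H.u α = H.u (α + 1)}

/-- The restriction `H|_S` of a candidate sequence to a subset, as a candidate
sequence on the subspace `S`. -/
def restrict (H : CandidateSeq M) (S : Set M) : CandidateSeq S where
  h k x := H.h k x.1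
  nonneg k x := H.nonneg k x.1
  mono x := H.mono x.1
  zero x := H.zero x.1
  limFn x := H.limFn x.1
  tendsto_limFn x := H.tendsto_limFn x.1
  bddAbove := H.bddAbove.imp fun B hB x => hB x.1

/-- The pullback `F ∘ π` of a candidate sequence along a map. -/
def comp {K : Type*} [TopologicalSpace K] (F : CandidateSeq K) (π : M → K) :
    CandidateSeq M where
  h k x := F.h k (π x)
  nonneg k x := F.nonneg k (π x)
  mono x := F.mono (π x)
  zero x := F.zero (π x)
  limFn x := F.limFn (π x)
  tendsto_limFn x := F.tendsto_limFn (π x)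
  bddAbove := F.bddAbove.imp fun B hB x => hB (π x)

/-- `H` uniformly dominates `F`. -/
def UnifDominates (H F : CandidateSeq M) : Prop :=
  ∀ ε : ℝ, 0 < ε → ∀ k, ∃ l, ∀ x, F.h k x ≤ H.h l x + ε

/-- Uniform equivalence of candidate sequences. -/
def UnifEquiv (H F : CandidateSeq M) : Prop :=
  UnifDominates H F ∧ UnifDominates F H

end CandidateSeq


namespace CandidateSeq

variable {M : Type*} [TopologicalSpace M]

lemma le_uscEnv' (f : M → ℝ≥0∞) (x : M) : f x ≤ uscEnv f x := by
  refine Filter.le_limsup_of_frequently_le ?_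
  have h1 : ∃ᶠ y in pure x, f x ≤ f y :=
    (Filter.eventually_pure.2 le_rfl).frequently
  exact h1.filter_mono (pure_le_nhds x)

lemma uscEnv_mono' {f g : M → ℝ≥0∞} (h : ∀ y, f y ≤ g y) (x : M) :
    uscEnv f x ≤ uscEnv g x :=
  Filter.limsup_le_limsup (Filter.Eventually.of_forall h)

lemma uscEnv_add_const (g : M → ℝ≥0∞) (c : ℝ≥0∞) (x : M) :
    uscEnv (fun y => g y + c) x = uscEnv g x + c := by
  have hmono : Monotone (fun a : ℝ≥0∞ => a + c) := fun a b hab => add_le_add_left hab c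
  have := (hmono.map_limsup_of_continuousAt (F := 𝓝 x) g
    ((continuous_add_right c).continuousAt)).symm
  simpa [uscEnv, Function.comp_def] using this

lemma u_zero' (H : CandidateSeq M) : H.u 0 = fun _ => 0 :=
  Ordinal.limitRecOn_zero _ _ _

lemma u_succ' (H : CandidateSeq M) (α : Ordinal) :
    H.u (α + 1) = fun x => ⨅ k : ℕ, uscEnv (fun y => H.u α y + H.tau k y) x := by
  rw [u, Ordinal.add_one_eq_succ, Ordinal.limitRecOn_succ]
  rfl

lemma u_limit' (H : CandidateSeq M) {α : Ordinal} (hα : Order.IsSuccLimit α) :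
    H.u α = uscEnv (fun y => ⨆ p : {β : Ordinal // β < α}, H.u p.1 y) := by
  rw [u, Ordinal.limitRecOn_limit _ _ _ _ hα]
  rfl

lemma u_le_succ' (H : CandidateSeq M) (α : Ordinal) (x : M) :
    H.u α x ≤ H.u (α + 1) x := by
  rw [u_succ']
  refine le_iInf fun k => le_trans ?_ (le_uscEnv' _ x)
  exact le_self_add

lemma u_mono' (H : CandidateSeq M) :
    ∀ α β : Ordinal, β ≤ α → ∀ x, H.u β x ≤ H.u α x := by
  intro α
  induction α using Ordinal.limitRecOn with
  | zero =>
    intro β hβ x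
    obtain rfl : β = 0 := nonpos_iff_eq_zero.mp hβ
    exact le_rfl
  | add_one α ih =>
    intro β hβ x
    rcases eq_or_lt_of_le hβ with rfl | hlt
    · exact le_rfl
    · have hβα : β ≤ α := by
        rw [Ordinal.add_one_eq_succ, Order.lt_succ_iff] at hlt
        exact hlt
      exact (ih β hβα x).trans (u_le_succ' H α x)
  | limit α hα ih =>
    intro β hβ x
    rcases eq_or_lt_of_le hβ with rfl | hlt
    · exact le_rfl
    · rw [u_limit' H hα]
      refine le_trans ?_ (le_uscEnv' _ x)
      exact le_iSup (fun p : {β : Ordinal // β < α} => H.u p.1 x) ⟨β, hlt⟩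

lemma limFn_le_of_dom {H F : CandidateSeq M} (hd : UnifDominates H F) (x : M) :
    F.limFn x ≤ H.limFn x := by
  refine le_of_forall_pos_le_add fun ε hε => ?_
  have hk : ∀ k, F.h k x ≤ H.limFn x + ε := by
    intro k
    obtain ⟨l, hl⟩ := hd ε hε k
    exact (hl x).trans (add_le_add_left ((H.mono x).ge_of_tendsto (H.tendsto_limFn x) l) ε)
  exact le_of_tendsto (F.tendsto_limFn x) (Filter.Eventually.of_forall hk)

lemma tau_le_of_dom {H F : CandidateSeq M} (hd : UnifDominates H F)
    (hlim : ∀ x, H.limFn x = F.limFn x) {ε : ℝ} (hε : 0 < ε) (k : ℕ) :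
    ∃ l, ∀ x, H.tau l x ≤ F.tau k x + ENNReal.ofReal ε := by
  obtain ⟨l, hl⟩ := hd ε hε k
  refine ⟨l, fun x => ?_⟩
  have h1 : H.limFn x - H.h l x ≤ (F.limFn x - F.h k x) + ε := by
    have := hl x
    have := hlim x
    linarith
  calc H.tau l x ≤ ENNReal.ofReal ((F.limFn x - F.h k x) + ε) := ENNReal.ofReal_le_ofReal h1
    _ ≤ F.tau k x + ENNReal.ofReal ε := ENNReal.ofReal_add_le

lemma succ_le_of_dom {H F : CandidateSeq M} (hd : UnifDominates H F)
    (hlim : ∀ x, H.limFn x = F.limFn x) (v : M → ℝ≥0∞) (x : M) :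
    (⨅ k : ℕ, uscEnv (fun y => v y + H.tau k y) x) ≤
      ⨅ k : ℕ, uscEnv (fun y => v y + F.tau k y) x := by
  refine le_iInf fun k => ?_
  refine ENNReal.le_of_forall_pos_le_add fun ε hε _ => ?_
  obtain ⟨l, hl⟩ := tau_le_of_dom hd hlim (by exact_mod_cast hε) k
  refine le_trans (iInf_le _ l) ?_
  have h2 : uscEnv (fun y => v y + H.tau l y) x ≤
      uscEnv (fun y => (v y + F.tau k y) + ENNReal.ofReal ε) x := by
    refine uscEnv_mono' (fun y => ?_) x
    calc v y + H.tau l y ≤ v y + (F.tau k y + ENNReal.ofReal ε) :=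
          add_le_add_right (hl y) _
      _ = (v y + F.tau k y) + ENNReal.ofReal ε := by ring
  refine h2.trans ?_
  rw [uscEnv_add_const]
  gcongr
  simp [ENNReal.ofReal_coe_nnreal]

lemma u_eq_of_equiv {H F : CandidateSeq M} (h : UnifEquiv H F) :
    ∀ α : Ordinal, H.u α = F.u α := by
  have hlim : ∀ x, H.limFn x = F.limFn x := fun x =>
    le_antisymm (limFn_le_of_dom h.2 x) (limFn_le_of_dom h.1 x)
  intro α
  induction α using Ordinal.limitRecOn with
  | zero => rw [u_zero', u_zero']
  | add_one α ih =>
    rw [u_succ', u_succ', ih]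
    funext x
    exact le_antisymm
      (succ_le_of_dom h.1 hlim (F.u α) x)
      (succ_le_of_dom h.2 (fun x => (hlim x).symm) (F.u α) x)
  | limit α hα ih =>
    have hs : (fun y => ⨆ p : {β : Ordinal // β < α}, H.u p.1 y) =
        fun y => ⨆ p : {β : Ordinal // β < α}, F.u p.1 y := by
      funext y
      exact iSup_congr fun p => by rw [ih p.1 p.2]
    rw [u_limit' H hα, u_limit' F hα, hs]

end CandidateSeq

/-- **Monotonicity in the ordinal and invariance under uniform equivalence**:
(i) for ordinals `β ≤ α`, `u_β^H ≤ u_α^H` pointwise; (ii) if `H` and `F` are uniformly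
equivalent candidate sequences on a compact metrizable space `M`, then `u_α^H = u_α^F`
for every ordinal `α`. -/
theorem uSeq_mono_and_unifEquiv_invariant {M : Type*} [TopologicalSpace M] [CompactSpace M]
    [TopologicalSpace.MetrizableSpace M] (H F : CandidateSeq M) :
    (∀ β α : Ordinal, β ≤ α → ∀ x, H.u β x ≤ H.u α x) ∧
      (CandidateSeq.UnifEquiv H F → ∀ α : Ordinal, H.u α = F.u α) := by
  constructor
  · intro β α hβα x
    exact H.u_mono' α β hβα x
  · intro h α
    exact CandidateSeq.u_eq_of_equiv h α
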